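/- Let H, m ∈ ℝ, let p ≥ 2 be an integer, and let φ, ψ : ℝ × ℝ → ℝ be twice continuously differentiable functions that are 1-periodic in the second (space) variable and satisfy the evolution equations ∂_t φ(t,x) = e^{-Ht} ψ(t,x) and ∂_t ψ(t,x) = -m² e^{Ht} φ(t,x) - e^{Ht} |φ(t,x)|^{p-1} φ(t,x) + e^{-Ht} ∂_x² φ(t,x) for all (t,x). Define the total Hamiltonian H_C(t) = ∫_0^1 [ (1/2) e^{-Ht} ψ(t,x)² + (m²/2) e^{Ht} φ(t,x)² + (1/(p+1)) e^{Ht} |φ(t,x)|^{p+1} + (1/2) e^{-Ht} (∂_x φ(t,x))² ] dx. Then H_C is differentiable and for every t, H_C'(t) = (H/2) e^{Ht} ∫_0^1 [ -e^{-2Ht} ψ(t,x)² + m² φ(t,x)² + (2/(p+1)) |φ(t,x)|^{p+1} - e^{-2Ht} (∂_x φ(t,x))² ] dx. -/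

import Mathlib

open Real
section helpers
variable {E : Type*} [NormedAddCommGroup E] [NormedSpace ℝ E]

lemma sliceSnd_hasDerivAt {f : ℝ × ℝ → E} (hf : Differentiable ℝ f) (t x : ℝ) :
    HasDerivAt (fun y => f (t, y)) (fderiv ℝ f (t, x) (0, 1)) x := by
  have h1 : HasDerivAt (fun y : ℝ => ((t, y) : ℝ × ℝ)) (((0 : ℝ), (1 : ℝ))) x :=
    (hasDerivAt_const x t).prodMk (hasDerivAt_id x)
  exact (hf (t, x)).hasFDerivAt.comp_hasDerivAt x h1

lemma sliceFst_hasDerivAt {f : ℝ × ℝ → E} (hf : Differentiable ℝ f) (t x : ℝ) :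
    HasDerivAt (fun s => f (s, x)) (fderiv ℝ f (t, x) (1, 0)) t := by
  have h1 : HasDerivAt (fun s : ℝ => ((s, x) : ℝ × ℝ)) (((1 : ℝ), (0 : ℝ))) t :=
    (hasDerivAt_id t).prodMk (hasDerivAt_const t x)
  exact (hf (t, x)).hasFDerivAt.comp_hasDerivAt t h1

lemma fderiv_apply_contDiff {f : ℝ × ℝ → E} (hf : ContDiff ℝ 2 f) (v : ℝ × ℝ) :
    ContDiff ℝ 1 (fun z => fderiv ℝ f z v) :=
  (hf.fderiv_right (le_refl _)).clm_apply contDiff_const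

lemma fderiv_fderiv_apply {f : ℝ × ℝ → E} (hf : ContDiff ℝ 2 f) (z u v : ℝ × ℝ) :
    fderiv ℝ (fun w => fderiv ℝ f w v) z u = (fderiv ℝ (fderiv ℝ f) z u) v := by
  have hd : HasFDerivAt (fderiv ℝ f) (fderiv ℝ (fderiv ℝ f) z) z :=
    ((hf.fderiv_right (m := 1) (le_refl _)).differentiable one_ne_zero z).hasFDerivAt
  have := ((ContinuousLinearMap.apply ℝ E v).hasFDerivAt.comp z hd).fderiv
  rw [show (fun w => fderiv ℝ f w v) = (ContinuousLinearMap.apply ℝ E v) ∘ (fderiv ℝ f) from rfl,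
    this]
  rfl

lemma fderiv_swap {f : ℝ × ℝ → E} (hf : ContDiff ℝ 2 f) (z u v : ℝ × ℝ) :
    fderiv ℝ (fun w => fderiv ℝ f w v) z u = fderiv ℝ (fun w => fderiv ℝ f w u) z v := by
  rw [fderiv_fderiv_apply hf, fderiv_fderiv_apply hf]
  have hd : HasFDerivAt (fderiv ℝ f) (fderiv ℝ (fderiv ℝ f) z) z :=
    ((hf.fderiv_right (m := 1) (le_refl _)).differentiable one_ne_zero z).hasFDerivAt
  exact second_derivative_symmetric (fun y => (hf.differentiable two_ne_zero y).hasFDerivAt) hd u v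

end helpers

noncomputable def pd1 (F : ℝ → ℝ → ℝ) (t x : ℝ) : ℝ :=
  fderiv ℝ (Function.uncurry F) (t, x) (1, 0)

noncomputable def pd2 (F : ℝ → ℝ → ℝ) (t x : ℝ) : ℝ :=
  fderiv ℝ (Function.uncurry F) (t, x) (0, 1)

section pd
variable {F : ℝ → ℝ → ℝ}

lemma pd2_hasDerivAt (h : Differentiable ℝ (Function.uncurry F)) (t x : ℝ) :
    HasDerivAt (fun y => F t y) (pd2 F t x) x :=
  sliceSnd_hasDerivAt h t x

lemma pd1_hasDerivAt (h : Differentiable ℝ (Function.uncurry F)) (t x : ℝ) :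
    HasDerivAt (fun s => F s x) (pd1 F t x) t :=
  sliceFst_hasDerivAt h t x

lemma deriv_eq_pd2 (h : Differentiable ℝ (Function.uncurry F)) (t x : ℝ) :
    deriv (fun y => F t y) x = pd2 F t x :=
  (pd2_hasDerivAt h t x).deriv

lemma deriv_eq_pd1 (h : Differentiable ℝ (Function.uncurry F)) (t x : ℝ) :
    deriv (fun s => F s x) t = pd1 F t x :=
  (pd1_hasDerivAt h t x).deriv

lemma pd2_uncurry_contDiff (h : ContDiff ℝ 2 (Function.uncurry F)) :
    ContDiff ℝ 1 (Function.uncurry (pd2 F)) :=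
  fderiv_apply_contDiff h _

lemma pd1_uncurry_contDiff (h : ContDiff ℝ 2 (Function.uncurry F)) :
    ContDiff ℝ 1 (Function.uncurry (pd1 F)) :=
  fderiv_apply_contDiff h _

lemma pd2_uncurry_continuous (h : ContDiff ℝ 1 (Function.uncurry F)) :
    Continuous (Function.uncurry (pd2 F)) :=
  (h.continuous_fderiv one_ne_zero).clm_apply continuous_const

lemma pd_swap (h : ContDiff ℝ 2 (Function.uncurry F)) (t x : ℝ) :
    pd1 (pd2 F) t x = pd2 (pd1 F) t x :=
  fderiv_swap h (t, x) (1, 0) (0, 1)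

lemma pd2_periodic (h : Differentiable ℝ (Function.uncurry F)) {t : ℝ}
    (hper : ∀ x, F t (x + 1) = F t x) (x : ℝ) :
    pd2 F t (x + 1) = pd2 F t x := by
  rw [← deriv_eq_pd2 h, ← deriv_eq_pd2 h]
  have h1 : deriv (fun y => F t (y + 1)) x = deriv (fun y => F t y) (x + 1) :=
    deriv_comp_add_const _ _ _
  rw [← h1]
  congr 1
  exact funext fun y => hper y

end pd

lemma hasDerivAt_abs_pow (n : ℕ) (hn : 2 ≤ n) (u : ℝ) :
    HasDerivAt (fun v : ℝ => |v| ^ n) ((n : ℝ) * |u| ^ (n - 2) * u) u := by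
  rcases lt_trichotomy u 0 with hu | hu | hu
  · have hev : (fun v : ℝ => (-v) ^ n) =ᶠ[nhds u] (fun v : ℝ => |v| ^ n) := by
      filter_upwards [eventually_lt_nhds hu] with v hv
      rw [abs_of_neg hv]
    have h1 : HasDerivAt (fun v : ℝ => (-v) ^ n) ((n : ℝ) * (-u) ^ (n - 1) * (-1)) u :=
      ((hasDerivAt_pow n (-u)).comp u (hasDerivAt_neg u))
    have h2 := h1.congr_of_eventuallyEq hev.symm
    refine h2.congr_deriv ?_
    have h3 : n - 1 = (n - 2) + 1 := by omega
    rw [h3, pow_succ, abs_of_neg hu]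
    ring
  · subst hu
    have key : HasDerivAt (fun v : ℝ => |v| ^ n) 0 0 := by
      rw [hasDerivAt_iff_tendsto_slope]
      have hb : ∀ v : ℝ, v ∈ Set.Ioo (-1 : ℝ) 1 \ {0} → |slope (fun v : ℝ => |v| ^ n) 0 v| ≤ |v| := by
        intro v hv
        have hv0 : v ≠ 0 := hv.2
        have hv1 : |v| ≤ 1 := by
          rcases hv.1 with ⟨h1, h2⟩
          rw [abs_le]; constructor <;> linarith
        rw [slope_def_field]
        have : ((|v| ^ n - |(0:ℝ)| ^ n) / (v - 0)) = |v| ^ n / v := by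
          simp [zero_pow (by omega : n ≠ 0)]
        rw [this, abs_div, abs_pow, abs_abs]
        rw [div_le_iff₀ (abs_pos.mpr hv0)]
        calc |v| ^ n = |v| ^ (n - 2) * (|v| * |v|) := by
              rw [show |v| * |v| = |v| ^ 2 by ring, ← pow_add]
              congr 1; omega
          _ ≤ 1 * (|v| * |v|) := by
              gcongr
              exact pow_le_one₀ (abs_nonneg v) hv1
          _ = |v| * |v| := by ring
      have hev : ∀ᶠ v in nhdsWithin (0:ℝ) {(0:ℝ)}ᶜ,
          |slope (fun v : ℝ => |v| ^ n) 0 v| ≤ |v| := by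
        filter_upwards [self_mem_nhdsWithin,
          mem_nhdsWithin_of_mem_nhds (Ioo_mem_nhds (by norm_num : (-1:ℝ) < 0) one_pos)]
          with v h1 h2
        exact hb v ⟨h2, h1⟩
      exact squeeze_zero_norm' hev
        ((continuous_abs.tendsto' 0 0 abs_zero).mono_left nhdsWithin_le_nhds)
    simpa using key
  · have hev : (fun v : ℝ => v ^ n) =ᶠ[nhds u] (fun v : ℝ => |v| ^ n) := by
      filter_upwards [eventually_gt_nhds hu] with v hv
      rw [abs_of_pos hv]
    have h2 := (hasDerivAt_pow n u).congr_of_eventuallyEq hev.symm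
    refine h2.congr_deriv ?_
    have h3 : n - 1 = (n - 2) + 1 := by omega
    rw [h3, pow_succ, abs_of_pos hu]
    ring

set_option maxHeartbeats 2000000 in
theorem deSitter_total_hamiltonian_derivative
    (H m : ℝ) (p : ℕ) (hp : 2 ≤ p)
    (φ ψ : ℝ → ℝ → ℝ)
    (hφ : ContDiff ℝ 2 (Function.uncurry φ))
    (hψ : ContDiff ℝ 2 (Function.uncurry ψ))
    (hφper : ∀ t x : ℝ, φ t (x + 1) = φ t x)
    (hψper : ∀ t x : ℝ, ψ t (x + 1) = ψ t x)
    (hevφ : ∀ t x : ℝ, deriv (fun s => φ s x) t = exp (-(H * t)) * ψ t x)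
    (hevψ : ∀ t x : ℝ, deriv (fun s => ψ s x) t
      = -m ^ 2 * exp (H * t) * φ t x
        - exp (H * t) * |φ t x| ^ (p - 1) * φ t x
        + exp (-(H * t)) * deriv (deriv (fun y => φ t y)) x)
    (H_C : ℝ → ℝ)
    (hH_C : ∀ t : ℝ, H_C t = ∫ x in (0:ℝ)..1,
      ((1 / 2) * exp (-(H * t)) * (ψ t x) ^ 2
        + (m ^ 2 / 2) * exp (H * t) * (φ t x) ^ 2
        + (1 / ((p : ℝ) + 1)) * exp (H * t) * |φ t x| ^ (p + 1)
        + (1 / 2) * exp (-(H * t)) * (deriv (fun y => φ t y) x) ^ 2)) :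
    ∀ t : ℝ, HasDerivAt H_C
      ((H / 2) * exp (H * t) * ∫ x in (0:ℝ)..1,
        (-(exp (-(2 * H * t))) * (ψ t x) ^ 2
          + m ^ 2 * (φ t x) ^ 2
          + (2 / ((p : ℝ) + 1)) * |φ t x| ^ (p + 1)
          - exp (-(2 * H * t)) * (deriv (fun y => φ t y) x) ^ 2)) t := by
  intro t₀
  have hfd : Differentiable ℝ (Function.uncurry φ) := hφ.differentiable two_ne_zero
  have hgd : Differentiable ℝ (Function.uncurry ψ) := hψ.differentiable two_ne_zero
  have hp1 : ((p : ℝ) + 1) ≠ 0 := by positivity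
  have hpd2φ : ContDiff ℝ 1 (Function.uncurry (pd2 φ)) := pd2_uncurry_contDiff hφ
  have hpd2φd : Differentiable ℝ (Function.uncurry (pd2 φ)) := hpd2φ.differentiable one_ne_zero
  have hpd1φ_eq : ∀ t x, pd1 φ t x = exp (-(H * t)) * ψ t x := fun t x => by
    rw [← deriv_eq_pd1 hfd, hevφ]
  have hderφ : ∀ t x, deriv (fun y => φ t y) x = pd2 φ t x := fun t x => deriv_eq_pd2 hfd t x
  have hderder : ∀ t x, deriv (deriv (fun y => φ t y)) x = pd2 (pd2 φ) t x := by
    intro t x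
    have h1 : deriv (fun y => φ t y) = fun y => pd2 φ t y := funext fun y => hderφ t y
    rw [h1]
    exact deriv_eq_pd2 hpd2φd t x
  have hψt : ∀ t x, HasDerivAt (fun s => ψ s x) (pd1 ψ t x) t := fun t x =>
    pd1_hasDerivAt hgd t x
  have hψt_eq : ∀ t x, pd1 ψ t x
      = -m ^ 2 * exp (H * t) * φ t x - exp (H * t) * |φ t x| ^ (p - 1) * φ t x
        + exp (-(H * t)) * pd2 (pd2 φ) t x := fun t x => by
    rw [← deriv_eq_pd1 hgd, hevψ, hderder]
  have hφxt : ∀ t x, HasDerivAt (fun s => pd2 φ s x) (exp (-(H * t)) * pd2 ψ t x) t := by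
    intro t x
    have h0 := pd1_hasDerivAt hpd2φd t x
    have h1 : pd1 (pd2 φ) t x = exp (-(H * t)) * pd2 ψ t x := by
      rw [pd_swap hφ]
      have h2 : pd1 φ = fun t x => exp (-(H * t)) * ψ t x :=
        funext fun t => funext fun x => hpd1φ_eq t x
      rw [h2]
      have h3 : Differentiable ℝ (Function.uncurry (fun t x => exp (-(H * t)) * ψ t x)) :=
        (((differentiable_fst.const_mul H).neg).exp).mul hgd
      exact (pd2_hasDerivAt h3 t x).unique
        (HasDerivAt.const_mul (exp (-(H * t))) (pd2_hasDerivAt hgd t x))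
    rw [← h1]; exact h0
  -- continuity facts
  have contφ : Continuous (Function.uncurry φ) := hφ.continuous
  have contψ : Continuous (Function.uncurry ψ) := hψ.continuous
  have contφx : Continuous (Function.uncurry (pd2 φ)) := hpd2φ.continuous
  have contψx : Continuous (Function.uncurry (pd2 ψ)) := (pd2_uncurry_contDiff hψ).continuous
  have contψt : Continuous (Function.uncurry (pd1 ψ)) := (pd1_uncurry_contDiff hψ).continuous
  have contφxx : Continuous (Function.uncurry (pd2 (pd2 φ))) := pd2_uncurry_continuous hpd2φ
  have cexp1 : Continuous (fun z : ℝ × ℝ => exp (-(H * z.1))) :=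
    ((continuous_const.mul continuous_fst : Continuous (fun z : ℝ × ℝ => H * z.1)).neg).rexp
  have cexp2 : Continuous (fun z : ℝ × ℝ => exp (H * z.1)) :=
    (continuous_const.mul continuous_fst : Continuous (fun z : ℝ × ℝ => H * z.1)).rexp
  set G : ℝ → ℝ → ℝ := fun s x =>
      (1/2) * (exp (-(H*s)) * ψ s x ^ 2) + (m^2/2) * (exp (H*s) * φ s x ^ 2)
      + (1/((p:ℝ)+1)) * (exp (H*s) * |φ s x| ^ (p+1))
      + (1/2) * (exp (-(H*s)) * pd2 φ s x ^ 2) with hG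
  set G' : ℝ → ℝ → ℝ := fun s x =>
      H * ((-(1/2)) * (exp (-(H*s)) * ψ s x ^ 2) + (m^2/2) * (exp (H*s) * φ s x ^ 2)
        + (1/((p:ℝ)+1)) * (exp (H*s) * |φ s x| ^ (p+1))
        - (1/2) * (exp (-(H*s)) * pd2 φ s x ^ 2))
      + exp (-(H*s)) * exp (-(H*s))
          * (pd2 ψ s x * pd2 φ s x + ψ s x * pd2 (pd2 φ) s x) with hG'
  have hGdiff : ∀ (x s : ℝ), HasDerivAt (fun s => G s x) (G' s x) s := by
    intro x s
    have hA : HasDerivAt (fun s : ℝ => exp (-(H*s))) (exp (-(H*s)) * (-H)) s := by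
      have h1 : HasDerivAt (fun s : ℝ => -(H*s)) (-H) s := by
        have h := ((hasDerivAt_id' s).const_mul H).neg
        simp only [mul_one] at h
        exact h
      exact h1.exp
    have hB : HasDerivAt (fun s : ℝ => exp (H*s)) (exp (H*s) * H) s := by
      have h1 : HasDerivAt (fun s : ℝ => H*s) H s := by
        simpa using (hasDerivAt_id s).const_mul H
      exact h1.exp
    have hφs : HasDerivAt (fun s => φ s x) (exp (-(H*s)) * ψ s x) s := by
      have h := pd1_hasDerivAt hfd s x
      rwa [hpd1φ_eq] at h
    have T3i : HasDerivAt (fun s => |φ s x| ^ (p + 1))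
        (((p:ℝ) + 1) * |φ s x| ^ (p - 1) * φ s x * (exp (-(H*s)) * ψ s x)) s := by
      have h := (hasDerivAt_abs_pow (p+1) (by omega) (φ s x)).comp s hφs
      have e1 : p + 1 - 2 = p - 1 := by omega
      rw [e1] at h
      have e2 : ((p:ℝ) + 1) = ((p + 1 : ℕ) : ℝ) := by push_cast; ring
      rw [e2]
      exact h
    have T1 := (hA.mul ((hψt s x).pow 2)).const_mul (1/2 : ℝ)
    have T2 := (hB.mul (hφs.pow 2)).const_mul (m^2/2 : ℝ)
    have T3 := (hB.mul T3i).const_mul (1/((p:ℝ)+1))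
    have T4 := (hA.mul ((hφxt s x).pow 2)).const_mul (1/2 : ℝ)
    have BIG := ((T1.add T2).add T3).add T4
    refine BIG.congr_deriv ?_
    rw [hG']
    rw [hψt_eq]
    simp only [Pi.pow_apply]
    push_cast
    field_simp
    ring
  -- joint continuity of G and G'
  have contG : Continuous (Function.uncurry G) := by
    rw [hG]
    exact ((((cexp1.mul (contψ.pow 2)).const_mul _).add
        ((cexp2.mul (contφ.pow 2)).const_mul _)).add
        ((cexp2.mul ((contφ.abs).pow _)).const_mul _)).add
        ((cexp1.mul (contφx.pow 2)).const_mul _)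
  have contG' : Continuous (Function.uncurry G') := by
    rw [hG']
    exact (((((cexp1.mul (contψ.pow 2)).const_mul _).add
        ((cexp2.mul (contφ.pow 2)).const_mul _)).add
        ((cexp2.mul ((contφ.abs).pow _)).const_mul _)).sub
        ((cexp1.mul (contφx.pow 2)).const_mul _)).const_mul H |>.add
        (((cexp1.mul cexp1).mul ((contψx.mul contφx).add (contψ.mul contφxx))))
  have hpm : ∀ s : ℝ, Continuous (fun x : ℝ => ((s, x) : ℝ × ℝ)) := fun s =>
    continuous_const.prodMk continuous_id
  have sliceContG : ∀ s : ℝ, Continuous (G s) := fun s => contG.uncurry_left s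
  have sliceContG' : ∀ s : ℝ, Continuous (G' s) := fun s => contG'.uncurry_left s
  -- bound on a compact set
  obtain ⟨C, hC⟩ := ((isCompact_Icc.prod isCompact_uIcc) :
      IsCompact ((Set.Icc (t₀ - 1) (t₀ + 1)) ×ˢ (Set.uIcc (0:ℝ) 1))).exists_bound_of_continuousOn
      contG'.continuousOn
  have key := intervalIntegral.hasDerivAt_integral_of_dominated_loc_of_deriv_le
      (F := G) (F' := G') (x₀ := t₀) (a := (0:ℝ)) (b := 1) (bound := fun _ => C)
      (μ := MeasureTheory.volume) (Metric.ball_mem_nhds t₀ one_pos)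
      (Filter.Eventually.of_forall fun s => (sliceContG s).aestronglyMeasurable)
      ((sliceContG t₀).intervalIntegrable 0 1)
      (sliceContG' t₀).aestronglyMeasurable
      (Filter.Eventually.of_forall fun x hx s hs => by
        have h1 : s ∈ Set.Icc (t₀ - 1) (t₀ + 1) := by
          have := Metric.mem_ball.mp hs
          rw [Real.dist_eq] at this
          have h2 := abs_lt.mp this
          constructor <;> [linarith [h2.1]; linarith [h2.2]]
        exact hC (s, x) (Set.mem_prod.mpr ⟨h1, Set.uIoc_subset_uIcc hx⟩))
      (intervalIntegrable_const)
      (Filter.Eventually.of_forall fun x _ s _ => hGdiff x s)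
  -- identification of H_C with the parametric integral
  have hHCeq : H_C = fun s => ∫ x in (0:ℝ)..1, G s x := by
    funext s
    rw [hH_C s, hG]
    apply intervalIntegral.integral_congr
    intro x _
    simp only
    rw [hderφ]
    ring
  -- integration by parts / periodicity
  have IBP : (∫ x in (0:ℝ)..1,
      (pd2 ψ t₀ x * pd2 φ t₀ x + ψ t₀ x * pd2 (pd2 φ) t₀ x)) = 0 := by
    have hd : ∀ x ∈ Set.uIcc (0:ℝ) 1, HasDerivAt (fun y => ψ t₀ y * pd2 φ t₀ y)
        (pd2 ψ t₀ x * pd2 φ t₀ x + ψ t₀ x * pd2 (pd2 φ) t₀ x) x :=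
      fun x _ => (pd2_hasDerivAt hgd t₀ x).mul (pd2_hasDerivAt hpd2φd t₀ x)
    have hint : IntervalIntegrable
        (fun x => pd2 ψ t₀ x * pd2 φ t₀ x + ψ t₀ x * pd2 (pd2 φ) t₀ x)
        MeasureTheory.volume 0 1 := by
      apply Continuous.intervalIntegrable
      have c1 : Continuous (fun x => pd2 ψ t₀ x) :=
        contψx.comp (hpm t₀)
      have c2 : Continuous (fun x => pd2 φ t₀ x) :=
        contφx.comp (hpm t₀)
      have c3 : Continuous (fun x => ψ t₀ x) :=
        contψ.comp (hpm t₀)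
      have c4 : Continuous (fun x => pd2 (pd2 φ) t₀ x) :=
        contφxx.comp (hpm t₀)
      exact (c1.mul c2).add (c3.mul c4)
    rw [intervalIntegral.integral_eq_sub_of_hasDerivAt hd hint]
    have e1 : ψ t₀ 1 = ψ t₀ 0 := by have := hψper t₀ 0; rwa [zero_add] at this
    have e2 : pd2 φ t₀ 1 = pd2 φ t₀ 0 := by
      have := pd2_periodic hfd (hφper t₀) 0; rwa [zero_add] at this
    rw [e1, e2]; ring
  -- value of the derivative integral
  have hval : (∫ x in (0:ℝ)..1, G' t₀ x)
      = (H / 2) * exp (H * t₀) * ∫ x in (0:ℝ)..1,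
        (-(exp (-(2 * H * t₀))) * (ψ t₀ x) ^ 2
          + m ^ 2 * (φ t₀ x) ^ 2
          + (2 / ((p : ℝ) + 1)) * |φ t₀ x| ^ (p + 1)
          - exp (-(2 * H * t₀)) * (deriv (fun y => φ t₀ y) x) ^ 2) := by
    have int1 : IntervalIntegrable (fun x => H * ((-(1/2)) * (exp (-(H*t₀)) * ψ t₀ x ^ 2)
        + (m^2/2) * (exp (H*t₀) * φ t₀ x ^ 2)
        + (1/((p:ℝ)+1)) * (exp (H*t₀) * |φ t₀ x| ^ (p+1))
        - (1/2) * (exp (-(H*t₀)) * pd2 φ t₀ x ^ 2))) MeasureTheory.volume 0 1 := by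
      apply Continuous.intervalIntegrable
      have c2 : Continuous (fun x => pd2 φ t₀ x) :=
        contφx.comp (hpm t₀)
      have c3 : Continuous (fun x => ψ t₀ x) :=
        contψ.comp (hpm t₀)
      have c5 : Continuous (fun x => φ t₀ x) :=
        contφ.comp (hpm t₀)
      exact ((((((c3.pow 2).const_mul _).const_mul _).add
        (((c5.pow 2).const_mul _).const_mul _)).add
        ((((c5.abs.pow _).const_mul _).const_mul _))).sub
        (((c2.pow 2).const_mul _).const_mul _)).const_mul H
    have int2 : IntervalIntegrable (fun x => exp (-(H*t₀)) * exp (-(H*t₀))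
        * (pd2 ψ t₀ x * pd2 φ t₀ x + ψ t₀ x * pd2 (pd2 φ) t₀ x)) MeasureTheory.volume 0 1 := by
      apply Continuous.intervalIntegrable
      have c1 : Continuous (fun x => pd2 ψ t₀ x) :=
        contψx.comp (hpm t₀)
      have c2 : Continuous (fun x => pd2 φ t₀ x) :=
        contφx.comp (hpm t₀)
      have c3 : Continuous (fun x => ψ t₀ x) :=
        contψ.comp (hpm t₀)
      have c4 : Continuous (fun x => pd2 (pd2 φ) t₀ x) :=
        contφxx.comp (hpm t₀)
      exact ((c1.mul c2).add (c3.mul c4)).const_mul _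
    have split : (∫ x in (0:ℝ)..1, G' t₀ x)
        = (∫ x in (0:ℝ)..1, H * ((-(1/2)) * (exp (-(H*t₀)) * ψ t₀ x ^ 2)
            + (m^2/2) * (exp (H*t₀) * φ t₀ x ^ 2)
            + (1/((p:ℝ)+1)) * (exp (H*t₀) * |φ t₀ x| ^ (p+1))
            - (1/2) * (exp (-(H*t₀)) * pd2 φ t₀ x ^ 2)))
          + ∫ x in (0:ℝ)..1, exp (-(H*t₀)) * exp (-(H*t₀))
              * (pd2 ψ t₀ x * pd2 φ t₀ x + ψ t₀ x * pd2 (pd2 φ) t₀ x) := by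
      rw [← intervalIntegral.integral_add int1 int2]
    rw [split, intervalIntegral.integral_const_mul (exp (-(H*t₀)) * exp (-(H*t₀)))
        (fun x => pd2 ψ t₀ x * pd2 φ t₀ x + ψ t₀ x * pd2 (pd2 φ) t₀ x), IBP, mul_zero, add_zero,
      ← intervalIntegral.integral_const_mul]
    apply intervalIntegral.integral_congr
    intro x _
    simp only
    rw [hderφ]
    have hexp2 : exp (-(2 * H * t₀)) = exp (-(H * t₀)) * exp (-(H * t₀)) := by
      rw [← exp_add]; ring_nf
    have hAB : exp (-(H * t₀)) * exp (H * t₀) = 1 := by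
      rw [← exp_add]; simp
    rw [hexp2]
    linear_combination ((H/2) * exp (-(H*t₀)) * (ψ t₀ x ^ 2 + pd2 φ t₀ x ^ 2)) * hAB
  rw [hHCeq, ← hval]
  exact key.2
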